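/- Let K, μ, p, Π, E, φ, Σ, Θ, Q : ℝ → ℝ be differentiable functions of a radial parameter r with K(r) > 0 for all r, and write s = Σ − (2/3)Θ. Suppose that at every r: (i) K′ = −φ·K, and (ii) (μ/3 − E − Π/2)′ = (3/2)·φ·(E + Π/2) − (1/2)·s·Q. Define M = (μ/3 − E − Π/2)/(2·K^(3/2)). Then M′ = (1/(4·K^(3/2)))·(φ·μ − s·Q). -/

import Mathlib

/-- Radial propagation of the Misner–Sharp mass: given K̂ = −φK and the Bianchi
radial propagation equation for μ/3 − E − Π/2, the mass
M = (μ/3 − E − Π/2)/(2K^(3/2)) satisfies M̂ = (1/(4K^(3/2)))·(φμ − sQ). -/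
theorem misner_sharp_mass_radial_propagation
    (K μ p Pa E φ Sg Θ Q : ℝ → ℝ)
    (hKdiff : Differentiable ℝ K) (hμdiff : Differentiable ℝ μ)
    (hpdiff : Differentiable ℝ p) (hPadiff : Differentiable ℝ Pa)
    (hEdiff : Differentiable ℝ E) (hφdiff : Differentiable ℝ φ)
    (hSgdiff : Differentiable ℝ Sg) (hΘdiff : Differentiable ℝ Θ)
    (hQdiff : Differentiable ℝ Q)
    (hKpos : ∀ r, 0 < K r)
    (s : ℝ → ℝ) (hs : s = fun r => Sg r - (2/3) * Θ r)
    (hKhat : ∀ r, deriv K r = -φ r * K r)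
    (hBianchi : ∀ r, deriv (fun r => μ r / 3 - E r - Pa r / 2) r
      = (3/2) * φ r * (E r + Pa r / 2) - (1/2) * s r * Q r)
    (M : ℝ → ℝ)
    (hM : M = fun r => (μ r / 3 - E r - Pa r / 2) / (2 * (K r) ^ ((3:ℝ)/2))) :
    ∀ r, deriv M r
      = (1 / (4 * (K r) ^ ((3:ℝ)/2))) * (φ r * μ r - s r * Q r) := by
  intro r
  have hF : HasDerivAt (fun r => μ r / 3 - E r - Pa r / 2)
      ((3/2) * φ r * (E r + Pa r / 2) - (1/2) * s r * Q r) r := by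
    have : DifferentiableAt ℝ (fun r => μ r / 3 - E r - Pa r / 2) r := by
      fun_prop
    simpa [hBianchi r] using this.hasDerivAt
  have hK : HasDerivAt K (-φ r * K r) r := by
    simpa [hKhat r] using (hKdiff r).hasDerivAt
  have hKne : K r ≠ 0 := (hKpos r).ne'
  have hKp : HasDerivAt (fun x => K x ^ ((3:ℝ)/2))
      ((-φ r * K r) * ((3:ℝ)/2) * K r ^ ((3:ℝ)/2 - 1)) r :=
    hK.rpow_const (Or.inl hKne)
  have hD : HasDerivAt (fun x => 2 * K x ^ ((3:ℝ)/2))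
      (2 * ((-φ r * K r) * ((3:ℝ)/2) * K r ^ ((3:ℝ)/2 - 1))) r := hKp.const_mul 2
  have ha : (0:ℝ) < K r ^ ((3:ℝ)/2) := Real.rpow_pos_of_pos (hKpos r) _
  have hDne : 2 * K r ^ ((3:ℝ)/2) ≠ 0 := by positivity
  have hMd := (hF.div hD hDne)
  have hderiv : deriv M r =
      (((3/2) * φ r * (E r + Pa r / 2) - (1/2) * s r * Q r) * (2 * K r ^ ((3:ℝ)/2))
        - (μ r / 3 - E r - Pa r / 2) *
          (2 * ((-φ r * K r) * ((3:ℝ)/2) * K r ^ ((3:ℝ)/2 - 1))))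
        / (2 * K r ^ ((3:ℝ)/2)) ^ 2 := by
    rw [hM]; exact hMd.deriv
  rw [hderiv]
  have hab : K r ^ ((3:ℝ)/2 - 1) * K r = K r ^ ((3:ℝ)/2) := by
    have : K r ^ ((3:ℝ)/2 - 1) * K r = K r ^ ((3:ℝ)/2 - 1 + 1) := by
      rw [Real.rpow_add (hKpos r), Real.rpow_one]
    rw [this]; norm_num
  have hb : K r ^ ((3:ℝ)/2 - 1) = K r ^ ((3:ℝ)/2) / K r := by
    rw [← hab, mul_div_assoc, div_self hKne, mul_one]
  rw [hb]
  field_simp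
  ring
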